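/- Let n ≥ 8. If an edge-coloring of K_n uses exactly 17 colors and K_n contains a rainbow copy of K_6 or a rainbow copy of K_6 minus one edge, then K_n contains a rainbow copy of 2P_4 (two vertex-disjoint paths on four vertices each). -/

import Mathlib

open SimpleGraph Finset

/-- Number of colors used by an edge-coloring of the complete graph on `Fin n`. -/
noncomputable def colorCount {n : ℕ} (c : Sym2 (Fin n) → ℕ) : ℕ :=
  (c '' (⊤ : SimpleGraph (Fin n)).edgeSet).ncard

/-- The coloring `c` of `K_n` admits a rainbow copy of the graph `G`. -/
def HasRainbowCopy {α : Type*} {n : ℕ} (c : Sym2 (Fin n) → ℕ) (G : SimpleGraph α) : Prop :=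
  ∃ f : α → Fin n, Function.Injective f ∧
    ∀ e₁ ∈ G.edgeSet, ∀ e₂ ∈ G.edgeSet, e₁ ≠ e₂ → c (Sym2.map f e₁) ≠ c (Sym2.map f e₂)

/-- The anti-Ramsey number `ar(K_n, G)`: the maximum number of colors in an edge-coloring
of `K_n` with no rainbow copy of `G`. -/
noncomputable def antiRamsey (n : ℕ) {α : Type*} (G : SimpleGraph α) : ℕ :=
  sSup {m | ∃ c : Sym2 (Fin n) → ℕ, ¬ HasRainbowCopy c G ∧ colorCount c = m}

/-- Two vertex-disjoint paths on four vertices: `2P₄`. -/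
def twoP4 : SimpleGraph (Fin 2 × Fin 4) where
  Adj u v := u.1 = v.1 ∧ (u.2.val + 1 = v.2.val ∨ v.2.val + 1 = u.2.val)
  symm := by
    constructor
    rintro u v ⟨h1, h2⟩
    exact ⟨h1.symm, h2.symm⟩
  loopless := by constructor; rintro u ⟨-, h⟩; omega

instance : DecidableRel twoP4.Adj := fun u v =>
  decidable_of_iff (u.1 = v.1 ∧ (u.2.val + 1 = v.2.val ∨ v.2.val + 1 = u.2.val)) Iff.rfl

lemma twoP4_adj_mem : ∀ x y : Fin 2 × Fin 4, twoP4.Adj x y →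
    s(x, y) ∈ ({s(((0:Fin 2),(0:Fin 4)),((0:Fin 2),(1:Fin 4))),
      s(((0:Fin 2),(1:Fin 4)),((0:Fin 2),(2:Fin 4))),
      s(((0:Fin 2),(2:Fin 4)),((0:Fin 2),(3:Fin 4))),
      s(((1:Fin 2),(0:Fin 4)),((1:Fin 2),(1:Fin 4))),
      s(((1:Fin 2),(1:Fin 4)),((1:Fin 2),(2:Fin 4))),
      s(((1:Fin 2),(2:Fin 4)),((1:Fin 2),(3:Fin 4)))} : Finset (Sym2 (Fin 2 × Fin 4))) := by
  decide

lemma mk2P4 {n : ℕ} (c : Sym2 (Fin n) → ℕ) (a b d e p q r s : Fin n)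
    (hv : ([a,b,d,e,p,q,r,s] : List (Fin n)).Nodup)
    (hc : ([c s(a,b), c s(b,d), c s(d,e), c s(p,q), c s(q,r), c s(r,s)] : List ℕ).Nodup) :
    HasRainbowCopy c twoP4 := by
  simp only [List.nodup_cons, List.mem_cons, List.mem_singleton, List.not_mem_nil,
    or_false, not_or, List.nodup_nil, and_true] at hv hc
  obtain ⟨⟨v1,v2,v3,v4,v5,v6,v7⟩,⟨v8,v9,v10,v11,v12,v13⟩,⟨v14,v15,v16,v17,v18⟩,
    ⟨v19,v20,v21,v22⟩,⟨v23,v24,v25⟩,⟨v26,v27⟩,⟨v28,-⟩⟩ := hv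
  obtain ⟨⟨c1,c2,c3,c4,c5⟩,⟨c6,c7,c8,c9⟩,⟨c10,c11,c12⟩,⟨c13,c14⟩,⟨c15,-⟩⟩ := hc
  refine ⟨fun x => ![![a,b,d,e],![p,q,r,s]] x.1 x.2, ?_, ?_⟩
  · intro x y hxy
    fin_cases x <;> fin_cases y <;> simp_all
  · intro e1 he1 e2 he2 hne
    induction e1 using Sym2.ind with | _ x1 y1 =>
    induction e2 using Sym2.ind with | _ x2 y2 =>
    rw [mem_edgeSet] at he1 he2
    have m1 := twoP4_adj_mem _ _ he1
    have m2 := twoP4_adj_mem _ _ he2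
    simp only [Finset.mem_insert, Finset.mem_singleton] at m1 m2
    rcases m1 with h1|h1|h1|h1|h1|h1 <;> rcases m2 with h2|h2|h2|h2|h2|h2 <;>
      rw [h1, h2] at hne ⊢ <;>
      simp only [Sym2.map_pair_eq, Matrix.cons_val_zero, Matrix.cons_val_one,
        Matrix.head_cons, Matrix.cons_val_two, Matrix.tail_cons, Matrix.cons_val_three] <;>
      first
        | exact absurd rfl hne
        | assumption
        | (exact fun h => (by assumption : _ ≠ _) h.symm)

namespace TwoP4AR

section Shapes

variable {n : ℕ} {c : Sym2 (Fin n) → ℕ} {f : Fin 6 → Fin n}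

/-- `P₁ = a - b - f t - f i₂`, `P₂ = f i₃ - f i₄ - f i₅ - f i₆`. -/
lemma shape2 (hf : Function.Injective f)
    (hR : ∀ i j k l : Fin 6, i ≠ j → k ≠ l → s(i,j) ≠ s(k,l) → s(i,j) ≠ s((0:Fin 6),(1:Fin 6)) →
      s(k,l) ≠ s((0:Fin 6),(1:Fin 6)) → c s(f i, f j) ≠ c s(f k, f l))
    {a b : Fin n} (ha : ∀ i, a ≠ f i) (hb : ∀ i, b ≠ f i) (hab : a ≠ b)
    {t i2 i3 i4 i5 i6 : Fin 6} (hnd : ([t,i2,i3,i4,i5,i6] : List (Fin 6)).Nodup)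
    (hE1 : s(t,i2) ≠ s((0:Fin 6),(1:Fin 6))) (hE2 : s(i3,i4) ≠ s((0:Fin 6),(1:Fin 6)))
    (hE3 : s(i4,i5) ≠ s((0:Fin 6),(1:Fin 6))) (hE4 : s(i5,i6) ≠ s((0:Fin 6),(1:Fin 6)))
    (hs : c s(a,b) ≠ c s(b, f t))
    (hA1 : c s(a,b) ≠ c s(f t, f i2)) (hA2 : c s(a,b) ≠ c s(f i3, f i4))
    (hA3 : c s(a,b) ≠ c s(f i4, f i5)) (hA4 : c s(a,b) ≠ c s(f i5, f i6))
    (hB1 : c s(b, f t) ≠ c s(f t, f i2)) (hB2 : c s(b, f t) ≠ c s(f i3, f i4))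
    (hB3 : c s(b, f t) ≠ c s(f i4, f i5)) (hB4 : c s(b, f t) ≠ c s(f i5, f i6)) :
    HasRainbowCopy c twoP4 := by
  simp only [List.nodup_cons, List.mem_cons, List.not_mem_nil, or_false, not_or,
    List.nodup_nil, and_true] at hnd
  obtain ⟨⟨d1,d2,d3,d4,d5⟩,⟨d6,d7,d8,d9⟩,⟨d10,d11,d12⟩,⟨d13,d14⟩,⟨d15,-⟩⟩ := hnd
  have hfne : ∀ i j : Fin 6, i ≠ j → f i ≠ f j := fun i j h e => h (hf e)
  have key : ∀ i j k l : Fin 6, i ≠ j → k ≠ l → ¬((i = k ∧ j = l) ∨ (i = l ∧ j = k)) →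
      s(i,j) ≠ s((0:Fin 6),(1:Fin 6)) → s(k,l) ≠ s((0:Fin 6),(1:Fin 6)) →
      c s(f i, f j) ≠ c s(f k, f l) := by
    intro i j k l hij hkl hne hg1 hg2
    exact hR i j k l hij hkl (fun he => hne (Sym2.eq_iff.mp he)) hg1 hg2
  apply mk2P4 c a b (f t) (f i2) (f i3) (f i4) (f i5) (f i6)
  · simp only [List.nodup_cons, List.mem_cons, List.not_mem_nil, or_false, not_or,
      List.nodup_nil, and_true]
    refine ⟨⟨hab, ha t, ha i2, ha i3, ha i4, ha i5, ha i6⟩,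
      ⟨hb t, hb i2, hb i3, hb i4, hb i5, hb i6⟩,
      ⟨hfne _ _ d1, hfne _ _ d2, hfne _ _ d3, hfne _ _ d4, hfne _ _ d5⟩,
      ⟨hfne _ _ d6, hfne _ _ d7, hfne _ _ d8, hfne _ _ d9⟩,
      ⟨hfne _ _ d10, hfne _ _ d11, hfne _ _ d12⟩,
      ⟨hfne _ _ d13, hfne _ _ d14⟩, ⟨hfne _ _ d15, fun h => h⟩⟩
  · simp only [List.nodup_cons, List.mem_cons, List.not_mem_nil, or_false, not_or,
      List.nodup_nil, and_true]
    refine ⟨⟨hs, hA1, hA2, hA3, hA4⟩, ⟨hB1, hB2, hB3, hB4⟩,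
      ⟨key _ _ _ _ d1 d10 (by tauto) hE1 hE2, key _ _ _ _ d1 d13 (by tauto) hE1 hE3,
       key _ _ _ _ d1 d15 (by tauto) hE1 hE4⟩,
      ⟨key _ _ _ _ d10 d13 (by tauto) hE2 hE3, key _ _ _ _ d10 d15 (by tauto) hE2 hE4⟩,
      ⟨key _ _ _ _ d13 d15 (by tauto) hE3 hE4, fun h => h⟩⟩


/-- `P₁ = a - f t1 - f i2 - f i3`, `P₂ = b - f t2 - f i5 - f i6`. -/
lemma shape1 (hf : Function.Injective f)
    (hR : ∀ i j k l : Fin 6, i ≠ j → k ≠ l → s(i,j) ≠ s(k,l) → s(i,j) ≠ s((0:Fin 6),(1:Fin 6)) →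
      s(k,l) ≠ s((0:Fin 6),(1:Fin 6)) → c s(f i, f j) ≠ c s(f k, f l))
    {a b : Fin n} (ha : ∀ i, a ≠ f i) (hb : ∀ i, b ≠ f i) (hab : a ≠ b)
    {t1 i2 i3 t2 i5 i6 : Fin 6} (hnd : ([t1,i2,i3,t2,i5,i6] : List (Fin 6)).Nodup)
    (hE1 : s(t1,i2) ≠ s((0:Fin 6),(1:Fin 6))) (hE2 : s(i2,i3) ≠ s((0:Fin 6),(1:Fin 6)))
    (hE3 : s(t2,i5) ≠ s((0:Fin 6),(1:Fin 6))) (hE4 : s(i5,i6) ≠ s((0:Fin 6),(1:Fin 6)))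
    (hs : c s(a, f t1) ≠ c s(b, f t2))
    (hA1 : c s(a, f t1) ≠ c s(f t1, f i2)) (hA2 : c s(a, f t1) ≠ c s(f i2, f i3))
    (hA3 : c s(a, f t1) ≠ c s(f t2, f i5)) (hA4 : c s(a, f t1) ≠ c s(f i5, f i6))
    (hB1 : c s(b, f t2) ≠ c s(f t1, f i2)) (hB2 : c s(b, f t2) ≠ c s(f i2, f i3))
    (hB3 : c s(b, f t2) ≠ c s(f t2, f i5)) (hB4 : c s(b, f t2) ≠ c s(f i5, f i6)) :
    HasRainbowCopy c twoP4 := by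
  simp only [List.nodup_cons, List.mem_cons, List.not_mem_nil, or_false, not_or,
    List.nodup_nil, and_true] at hnd
  obtain ⟨⟨d1,d2,d3,d4,d5⟩,⟨d6,d7,d8,d9⟩,⟨d10,d11,d12⟩,⟨d13,d14⟩,⟨d15,-⟩⟩ := hnd
  have hfne : ∀ i j : Fin 6, i ≠ j → f i ≠ f j := fun i j h e => h (hf e)
  have key : ∀ i j k l : Fin 6, i ≠ j → k ≠ l → ¬((i = k ∧ j = l) ∨ (i = l ∧ j = k)) →
      s(i,j) ≠ s((0:Fin 6),(1:Fin 6)) → s(k,l) ≠ s((0:Fin 6),(1:Fin 6)) →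
      c s(f i, f j) ≠ c s(f k, f l) := by
    intro i j k l hij hkl hne hg1 hg2
    exact hR i j k l hij hkl (fun he => hne (Sym2.eq_iff.mp he)) hg1 hg2
  apply mk2P4 c a (f t1) (f i2) (f i3) b (f t2) (f i5) (f i6)
  · simp only [List.nodup_cons, List.mem_cons, List.not_mem_nil, or_false, not_or,
      List.nodup_nil, and_true]
    refine ⟨⟨ha t1, ha i2, ha i3, hab, ha t2, ha i5, ha i6⟩,
      ⟨hfne _ _ d1, hfne _ _ d2, fun h => hb t1 h.symm, hfne _ _ d3, hfne _ _ d4, hfne _ _ d5⟩,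
      ⟨hfne _ _ d6, fun h => hb i2 h.symm, hfne _ _ d7, hfne _ _ d8, hfne _ _ d9⟩,
      ⟨fun h => hb i3 h.symm, hfne _ _ d10, hfne _ _ d11, hfne _ _ d12⟩,
      ⟨hb t2, hb i5, hb i6⟩, ⟨hfne _ _ d13, hfne _ _ d14⟩, ⟨hfne _ _ d15, fun h => h⟩⟩
  · simp only [List.nodup_cons, List.mem_cons, List.not_mem_nil, or_false, not_or,
      List.nodup_nil, and_true]
    refine ⟨⟨hA1, hA2, hs, hA3, hA4⟩,
      ⟨key _ _ _ _ d1 d6 (by tauto) hE1 hE2, fun h => hB1 h.symm,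
       key _ _ _ _ d1 d13 (by tauto) hE1 hE3, key _ _ _ _ d1 d15 (by tauto) hE1 hE4⟩,
      ⟨fun h => hB2 h.symm, key _ _ _ _ d6 d13 (by tauto) hE2 hE3,
       key _ _ _ _ d6 d15 (by tauto) hE2 hE4⟩,
      ⟨hB3, hB4⟩, ⟨key _ _ _ _ d13 d15 (by tauto) hE3 hE4, fun h => h⟩⟩

/-- `P₁ = a - f t - f i2 - f i3`, `P₂ = b - e - f u - f i6`. -/
lemma shape3 (hf : Function.Injective f)
    (hR : ∀ i j k l : Fin 6, i ≠ j → k ≠ l → s(i,j) ≠ s(k,l) → s(i,j) ≠ s((0:Fin 6),(1:Fin 6)) →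
      s(k,l) ≠ s((0:Fin 6),(1:Fin 6)) → c s(f i, f j) ≠ c s(f k, f l))
    {a b e : Fin n} (ha : ∀ i, a ≠ f i) (hb : ∀ i, b ≠ f i) (he : ∀ i, e ≠ f i)
    (hab : a ≠ b) (hae : a ≠ e) (hbe : b ≠ e)
    {t i2 i3 u i6 : Fin 6} (hnd : ([t,i2,i3,u,i6] : List (Fin 6)).Nodup)
    (hE1 : s(t,i2) ≠ s((0:Fin 6),(1:Fin 6))) (hE2 : s(i2,i3) ≠ s((0:Fin 6),(1:Fin 6)))
    (hE3 : s(u,i6) ≠ s((0:Fin 6),(1:Fin 6)))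
    (hsAB : c s(a, f t) ≠ c s(b, e)) (hsAE : c s(a, f t) ≠ c s(e, f u))
    (hsBE : c s(b, e) ≠ c s(e, f u))
    (hA1 : c s(a, f t) ≠ c s(f t, f i2)) (hA2 : c s(a, f t) ≠ c s(f i2, f i3))
    (hA3 : c s(a, f t) ≠ c s(f u, f i6))
    (hB1 : c s(b, e) ≠ c s(f t, f i2)) (hB2 : c s(b, e) ≠ c s(f i2, f i3))
    (hB3 : c s(b, e) ≠ c s(f u, f i6))
    (hC1 : c s(e, f u) ≠ c s(f t, f i2)) (hC2 : c s(e, f u) ≠ c s(f i2, f i3))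
    (hC3 : c s(e, f u) ≠ c s(f u, f i6)) :
    HasRainbowCopy c twoP4 := by
  simp only [List.nodup_cons, List.mem_cons, List.not_mem_nil, or_false, not_or,
    List.nodup_nil, and_true] at hnd
  obtain ⟨⟨d1,d2,d3,d4⟩,⟨d5,d6,d7⟩,⟨d8,d9⟩,⟨d10,-⟩⟩ := hnd
  have hfne : ∀ i j : Fin 6, i ≠ j → f i ≠ f j := fun i j h e => h (hf e)
  have key : ∀ i j k l : Fin 6, i ≠ j → k ≠ l → ¬((i = k ∧ j = l) ∨ (i = l ∧ j = k)) →
      s(i,j) ≠ s((0:Fin 6),(1:Fin 6)) → s(k,l) ≠ s((0:Fin 6),(1:Fin 6)) →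
      c s(f i, f j) ≠ c s(f k, f l) := by
    intro i j k l hij hkl hne hg1 hg2
    exact hR i j k l hij hkl (fun h2 => hne (Sym2.eq_iff.mp h2)) hg1 hg2
  apply mk2P4 c a (f t) (f i2) (f i3) b e (f u) (f i6)
  · simp only [List.nodup_cons, List.mem_cons, List.not_mem_nil, or_false, not_or,
      List.nodup_nil, and_true]
    refine ⟨⟨ha t, ha i2, ha i3, hab, hae, ha u, ha i6⟩,
      ⟨hfne _ _ d1, hfne _ _ d2, fun h => hb t h.symm, fun h => he t h.symm,
       hfne _ _ d3, hfne _ _ d4⟩,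
      ⟨hfne _ _ d5, fun h => hb i2 h.symm, fun h => he i2 h.symm, hfne _ _ d6, hfne _ _ d7⟩,
      ⟨fun h => hb i3 h.symm, fun h => he i3 h.symm, hfne _ _ d8, hfne _ _ d9⟩,
      ⟨hbe, hb u, hb i6⟩, ⟨he u, he i6⟩, ⟨hfne _ _ d10, fun h => h⟩⟩
  · simp only [List.nodup_cons, List.mem_cons, List.not_mem_nil, or_false, not_or,
      List.nodup_nil, and_true]
    refine ⟨⟨hA1, hA2, hsAB, hsAE, hA3⟩,
      ⟨key _ _ _ _ d1 d5 (by tauto) hE1 hE2, fun h => hB1 h.symm, fun h => hC1 h.symm,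
       key _ _ _ _ d1 d10 (by tauto) hE1 hE3⟩,
      ⟨fun h => hB2 h.symm, fun h => hC2 h.symm, key _ _ _ _ d5 d10 (by tauto) hE2 hE3⟩,
      ⟨hsBE, hB3⟩, ⟨hC3, fun h => h⟩⟩

/-- `P₁ = f i1 - f t1 - a - f t2`, `P₂ = b - f u - f i5 - f i6`. -/
lemma shape6 (hf : Function.Injective f)
    (hR : ∀ i j k l : Fin 6, i ≠ j → k ≠ l → s(i,j) ≠ s(k,l) → s(i,j) ≠ s((0:Fin 6),(1:Fin 6)) →
      s(k,l) ≠ s((0:Fin 6),(1:Fin 6)) → c s(f i, f j) ≠ c s(f k, f l))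
    {a b : Fin n} (ha : ∀ i, a ≠ f i) (hb : ∀ i, b ≠ f i) (hab : a ≠ b)
    {i1 t1 t2 u i5 i6 : Fin 6} (hnd : ([i1,t1,t2,u,i5,i6] : List (Fin 6)).Nodup)
    (hE1 : s(i1,t1) ≠ s((0:Fin 6),(1:Fin 6))) (hE2 : s(u,i5) ≠ s((0:Fin 6),(1:Fin 6)))
    (hE3 : s(i5,i6) ≠ s((0:Fin 6),(1:Fin 6)))
    (hsA12 : c s(f t1, a) ≠ c s(a, f t2)) (hsA1B : c s(f t1, a) ≠ c s(b, f u))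
    (hsA2B : c s(a, f t2) ≠ c s(b, f u))
    (h1A : c s(f t1, a) ≠ c s(f i1, f t1)) (hA1I2 : c s(f t1, a) ≠ c s(f u, f i5))
    (hA1I3 : c s(f t1, a) ≠ c s(f i5, f i6))
    (h2A : c s(a, f t2) ≠ c s(f i1, f t1)) (hA2I2 : c s(a, f t2) ≠ c s(f u, f i5))
    (hA2I3 : c s(a, f t2) ≠ c s(f i5, f i6))
    (hBA : c s(b, f u) ≠ c s(f i1, f t1)) (hBI2 : c s(b, f u) ≠ c s(f u, f i5))
    (hBI3 : c s(b, f u) ≠ c s(f i5, f i6)) :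
    HasRainbowCopy c twoP4 := by
  simp only [List.nodup_cons, List.mem_cons, List.not_mem_nil, or_false, not_or,
    List.nodup_nil, and_true] at hnd
  obtain ⟨⟨d1,d2,d3,d4,d5⟩,⟨d6,d7,d8,d9⟩,⟨d10,d11,d12⟩,⟨d13,d14⟩,⟨d15,-⟩⟩ := hnd
  have hfne : ∀ i j : Fin 6, i ≠ j → f i ≠ f j := fun i j h e => h (hf e)
  have key : ∀ i j k l : Fin 6, i ≠ j → k ≠ l → ¬((i = k ∧ j = l) ∨ (i = l ∧ j = k)) →
      s(i,j) ≠ s((0:Fin 6),(1:Fin 6)) → s(k,l) ≠ s((0:Fin 6),(1:Fin 6)) →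
      c s(f i, f j) ≠ c s(f k, f l) := by
    intro i j k l hij hkl hne hg1 hg2
    exact hR i j k l hij hkl (fun h2 => hne (Sym2.eq_iff.mp h2)) hg1 hg2
  apply mk2P4 c (f i1) (f t1) a (f t2) b (f u) (f i5) (f i6)
  · simp only [List.nodup_cons, List.mem_cons, List.not_mem_nil, or_false, not_or,
      List.nodup_nil, and_true]
    refine ⟨⟨hfne _ _ d1, fun h => ha i1 h.symm, hfne _ _ d2, fun h => hb i1 h.symm,
       hfne _ _ d3, hfne _ _ d4, hfne _ _ d5⟩,
      ⟨fun h => ha t1 h.symm, hfne _ _ d6, fun h => hb t1 h.symm, hfne _ _ d7,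
       hfne _ _ d8, hfne _ _ d9⟩,
      ⟨ha t2, hab, ha u, ha i5, ha i6⟩,
      ⟨fun h => hb t2 h.symm, hfne _ _ d10, hfne _ _ d11, hfne _ _ d12⟩,
      ⟨hb u, hb i5, hb i6⟩, ⟨hfne _ _ d13, hfne _ _ d14⟩, ⟨hfne _ _ d15, fun h => h⟩⟩
  · simp only [List.nodup_cons, List.mem_cons, List.not_mem_nil, or_false, not_or,
      List.nodup_nil, and_true]
    refine ⟨⟨fun h => h1A h.symm, fun h => h2A h.symm, fun h => hBA h.symm,
       key _ _ _ _ d1 d13 (by tauto) hE1 hE2, key _ _ _ _ d1 d15 (by tauto) hE1 hE3⟩,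
      ⟨hsA12, hsA1B, hA1I2, hA1I3⟩,
      ⟨hsA2B, hA2I2, hA2I3⟩,
      ⟨hBI2, hBI3⟩, ⟨key _ _ _ _ d13 d15 (by tauto) hE2 hE3, fun h => h⟩⟩




def L6 : List (Fin 6) := [0,1,2,3,4,5]

def okB (a b h1 h2 : Fin 6) : Bool :=
  !((a == 0 && b == 1) || (a == 1 && b == 0) || (a == h1 && b == h2) || (a == h2 && b == h1))

lemma okB_spec {a b h1 h2 : Fin 6} (h : okB a b h1 h2 = true) :
    s(a,b) ≠ s((0:Fin 6),(1:Fin 6)) ∧ s(a,b) ≠ s(h1,h2) := by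
  simp only [okB, Bool.not_eq_true', Bool.or_eq_false_iff, Bool.and_eq_false_iff,
    beq_eq_false_iff_ne, ne_eq] at h
  obtain ⟨⟨⟨h1', h2'⟩, h3⟩, h4⟩ := h
  constructor <;> intro hh <;> rw [Sym2.eq_iff] at hh <;>
    rcases hh with ⟨rfl, rfl⟩ | ⟨rfl, rfl⟩ <;> simp_all

def okB2 (a b h1 h2 h3 h4 : Fin 6) : Bool :=
  okB a b h1 h2 && okB a b h3 h4

lemma okB2_spec {a b h1 h2 h3 h4 : Fin 6} (h : okB2 a b h1 h2 h3 h4 = true) :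
    s(a,b) ≠ s((0:Fin 6),(1:Fin 6)) ∧ s(a,b) ≠ s(h1,h2) ∧ s(a,b) ≠ s(h3,h4) := by
  rw [okB2, Bool.and_eq_true] at h
  exact ⟨(okB_spec h.1).1, (okB_spec h.1).2, (okB_spec h.2).2⟩

/-! selection for shape 1 : `P₁ = a - f t1 - f z1 - f z2`, `P₂ = b - f t2 - f z3 - f z4` -/

def sel1check (t1 t2 : Fin 6) : Bool :=
  L6.any fun z1 => (t1 != z1) && (t2 != z1) && okB t1 z1 0 1 &&
  (L6.any fun z2 => (t1 != z2) && (t2 != z2) && (z1 != z2) && okB z1 z2 0 1 &&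
  (L6.any fun z3 => (t1 != z3) && (t2 != z3) && (z1 != z3) && (z2 != z3) && okB t2 z3 0 1 &&
  (L6.any fun z4 => (t1 != z4) && (t2 != z4) && (z1 != z4) && (z2 != z4) && (z3 != z4) && okB z3 z4 0 1)))

set_option maxHeartbeats 1000000 in
lemma sel1check_true : ∀ t1 t2 : Fin 6, t1 ≠ t2 → sel1check t1 t2 = true := by decide

lemma sel1 {t1 t2 : Fin 6} (ht : t1 ≠ t2) :
    ∃ z1 z2 z3 z4 : Fin 6, ([t1,z1,z2,t2,z3,z4] : List (Fin 6)).Nodup ∧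
      s(t1,z1) ≠ s((0:Fin 6),(1:Fin 6)) ∧ s(z1,z2) ≠ s((0:Fin 6),(1:Fin 6)) ∧
      s(t2,z3) ≠ s((0:Fin 6),(1:Fin 6)) ∧ s(z3,z4) ≠ s((0:Fin 6),(1:Fin 6)) := by
  have H := sel1check_true t1 t2 ht
  simp only [sel1check, List.any_eq_true, Bool.and_eq_true, bne_iff_ne, ne_eq] at H
  obtain ⟨z1, -, ⟨⟨a1, a2⟩, k1⟩, z2, -, ⟨⟨⟨b1, b2⟩, b3⟩, k2⟩,
    z3, -, ⟨⟨⟨⟨c1, c2⟩, c3⟩, c4⟩, k3⟩, z4, -, ⟨⟨⟨⟨⟨e1, e2⟩, e3⟩, e4⟩, e5⟩, k4⟩⟩ := H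
  exact ⟨z1, z2, z3, z4,
    by simp_all [List.nodup_cons]; exact ⟨fun h => a2 h.symm, fun h => b2 h.symm⟩,
    (okB_spec k1).1, (okB_spec k2).1, (okB_spec k3).1, (okB_spec k4).1⟩

/-! selection for shape 2 : `P₁ = a - b - f t - f i2`, `P₂ = f i3 - f i4 - f i5 - f i6`,
with two avoided pairs -/

def sel2check (t h1 h2 h3 h4 : Fin 6) : Bool :=
  L6.any fun i2 => (t != i2) && okB2 t i2 h1 h2 h3 h4 &&
  (L6.any fun i3 => (t != i3) && (i2 != i3) &&
  (L6.any fun i4 => (t != i4) && (i2 != i4) && (i3 != i4) && okB2 i3 i4 h1 h2 h3 h4 &&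
  (L6.any fun i5 => (t != i5) && (i2 != i5) && (i3 != i5) && (i4 != i5) && okB2 i4 i5 h1 h2 h3 h4 &&
  (L6.any fun i6 => (t != i6) && (i2 != i6) && (i3 != i6) && (i4 != i6) && (i5 != i6) && okB2 i5 i6 h1 h2 h3 h4))))

set_option maxHeartbeats 10000000 in
lemma sel2check_true : ∀ t h1 h2 h3 h4 : Fin 6, sel2check t h1 h2 h3 h4 = true := by decide

lemma sel2 (t h1 h2 h3 h4 : Fin 6) :
    ∃ i2 i3 i4 i5 i6 : Fin 6, ([t,i2,i3,i4,i5,i6] : List (Fin 6)).Nodup ∧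
      (s(t,i2) ≠ s((0:Fin 6),(1:Fin 6)) ∧ s(t,i2) ≠ s(h1,h2) ∧ s(t,i2) ≠ s(h3,h4)) ∧
      (s(i3,i4) ≠ s((0:Fin 6),(1:Fin 6)) ∧ s(i3,i4) ≠ s(h1,h2) ∧ s(i3,i4) ≠ s(h3,h4)) ∧
      (s(i4,i5) ≠ s((0:Fin 6),(1:Fin 6)) ∧ s(i4,i5) ≠ s(h1,h2) ∧ s(i4,i5) ≠ s(h3,h4)) ∧
      (s(i5,i6) ≠ s((0:Fin 6),(1:Fin 6)) ∧ s(i5,i6) ≠ s(h1,h2) ∧ s(i5,i6) ≠ s(h3,h4)) := by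
  have H := sel2check_true t h1 h2 h3 h4
  simp only [sel2check, List.any_eq_true, Bool.and_eq_true, bne_iff_ne, ne_eq] at H
  obtain ⟨i2, -, ⟨h12, hk1⟩, i3, -, ⟨h13, h23⟩, i4, -, ⟨⟨⟨h14, h24⟩, h34⟩, hk2⟩,
    i5, -, ⟨⟨⟨⟨h15, h25⟩, h35⟩, h45⟩, hk3⟩, i6, -, ⟨⟨⟨⟨⟨h16, h26⟩, h36⟩, h46⟩, h56⟩, hk4⟩⟩ := H
  exact ⟨i2, i3, i4, i5, i6, by simp_all [List.nodup_cons],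
    okB2_spec hk1, okB2_spec hk2, okB2_spec hk3, okB2_spec hk4⟩

/-! selection for shape 3 : `P₁ = a - f t - f i2 - f i3`, `P₂ = b - e - f u - f i6` -/

def sel3check (t u h1 h2 : Fin 6) : Bool :=
  L6.any fun i2 => (t != i2) && (u != i2) && okB t i2 h1 h2 &&
  (L6.any fun i3 => (t != i3) && (u != i3) && (i2 != i3) && okB i2 i3 h1 h2 &&
  (L6.any fun i6 => (t != i6) && (u != i6) && (i2 != i6) && (i3 != i6) && okB u i6 h1 h2))

set_option maxHeartbeats 4000000 in
lemma sel3check_true : ∀ t u h1 h2 : Fin 6, t ≠ u → sel3check t u h1 h2 = true := by decide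

lemma sel3 {t u : Fin 6} (h1 h2 : Fin 6) (htu : t ≠ u) :
    ∃ i2 i3 i6 : Fin 6, ([t,i2,i3,u,i6] : List (Fin 6)).Nodup ∧
      (s(t,i2) ≠ s((0:Fin 6),(1:Fin 6)) ∧ s(t,i2) ≠ s(h1,h2)) ∧
      (s(i2,i3) ≠ s((0:Fin 6),(1:Fin 6)) ∧ s(i2,i3) ≠ s(h1,h2)) ∧
      (s(u,i6) ≠ s((0:Fin 6),(1:Fin 6)) ∧ s(u,i6) ≠ s(h1,h2)) := by
  have H := sel3check_true t u h1 h2 htu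
  simp only [sel3check, List.any_eq_true, Bool.and_eq_true, bne_iff_ne, ne_eq] at H
  obtain ⟨i2, -, ⟨⟨a1, a2⟩, k1⟩, i3, -, ⟨⟨⟨b1, b2⟩, b3⟩, k2⟩,
    i6, -, ⟨⟨⟨⟨e1, e2⟩, e3⟩, e4⟩, k3⟩⟩ := H
  exact ⟨i2, i3, i6,
    by simp_all [List.nodup_cons]; exact ⟨fun h => a2 h.symm, fun h => b2 h.symm⟩,
    okB_spec k1, okB_spec k2, okB_spec k3⟩

/-! selection for shape 6 : `P₁ = f i1 - f t1 - a - f t2`, `P₂ = b - f u - f i5 - f i6` -/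

def sel6check (t1 t2 u h1 h2 : Fin 6) : Bool :=
  L6.any fun i1 => (i1 != t1) && (i1 != t2) && (i1 != u) && okB i1 t1 h1 h2 &&
  (L6.any fun i5 => (t1 != i5) && (t2 != i5) && (u != i5) && (i1 != i5) && okB u i5 h1 h2 &&
  (L6.any fun i6 => (t1 != i6) && (t2 != i6) && (u != i6) && (i1 != i6) && (i5 != i6) && okB i5 i6 h1 h2))

set_option maxHeartbeats 8000000 in
lemma sel6check_true : ∀ t1 t2 u h1 h2 : Fin 6,
    t1 ≠ t2 → t1 ≠ u → t2 ≠ u → sel6check t1 t2 u h1 h2 = true := by decide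

lemma sel6 {t1 t2 u : Fin 6} (h1 h2 : Fin 6) (h12 : t1 ≠ t2) (h1u : t1 ≠ u) (h2u : t2 ≠ u) :
    ∃ i1 i5 i6 : Fin 6, ([i1,t1,t2,u,i5,i6] : List (Fin 6)).Nodup ∧
      (s(i1,t1) ≠ s((0:Fin 6),(1:Fin 6)) ∧ s(i1,t1) ≠ s(h1,h2)) ∧
      (s(u,i5) ≠ s((0:Fin 6),(1:Fin 6)) ∧ s(u,i5) ≠ s(h1,h2)) ∧
      (s(i5,i6) ≠ s((0:Fin 6),(1:Fin 6)) ∧ s(i5,i6) ≠ s(h1,h2)) := by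
  have H := sel6check_true t1 t2 u h1 h2 h12 h1u h2u
  simp only [sel6check, List.any_eq_true, Bool.and_eq_true, bne_iff_ne, ne_eq] at H
  obtain ⟨i1, -, ⟨⟨⟨a1, a2⟩, a3⟩, k1⟩, i5, -, ⟨⟨⟨⟨b1, b2⟩, b3⟩, b4⟩, k2⟩,
    i6, -, ⟨⟨⟨⟨⟨e1, e2⟩, e3⟩, e4⟩, e5⟩, k3⟩⟩ := H
  exact ⟨i1, i5, i6, by simp_all [List.nodup_cons], okB_spec k1, okB_spec k2, okB_spec k3⟩



abbrev RB (c : Sym2 (Fin n) → ℕ) (f : Fin 6 → Fin n) : Prop :=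
  ∀ i j k l : Fin 6, i ≠ j → k ≠ l → s(i,j) ≠ s(k,l) → s(i,j) ≠ s((0:Fin 6),(1:Fin 6)) →
    s(k,l) ≠ s((0:Fin 6),(1:Fin 6)) → c s(f i, f j) ≠ c s(f k, f l)

abbrev Fresh (c : Sym2 (Fin n) → ℕ) (f : Fin 6 → Fin n) (δ : ℕ) : Prop :=
  ∀ k l : Fin 6, k ≠ l → c s(f k, f l) ≠ δ

abbrev Cov (c : Sym2 (Fin n) → ℕ) (f : Fin 6 → Fin n) (γ : ℕ) (h1 h2 : Fin 6) : Prop :=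
  ∀ k l : Fin 6, k ≠ l → s(k,l) ≠ s((0:Fin 6),(1:Fin 6)) → s(k,l) ≠ s(h1,h2) →
    c s(f k, f l) ≠ γ

lemma cover (hR : RB c f) (γ : ℕ) : ∃ h1 h2 : Fin 6, Cov c f γ h1 h2 := by
  by_cases H : ∃ k l : Fin 6, k ≠ l ∧ s(k,l) ≠ s((0:Fin 6),(1:Fin 6)) ∧ c s(f k, f l) = γ
  · obtain ⟨k0, l0, hkl, hg, hcc⟩ := H
    exact ⟨k0, l0, fun k l h1 h2 h3 heq =>
      hR k l k0 l0 h1 hkl h3 h2 hg (heq.trans hcc.symm)⟩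
  · push_neg at H
    exact ⟨0, 1, fun k l h1 h2 _ => H k l h1 h2⟩

lemma exists_ne2 : ∀ a b : Fin 6, ∃ u : Fin 6, u ≠ a ∧ u ≠ b := by decide

lemma exists_outside2 (hn : 8 ≤ n) (f : Fin 6 → Fin n) (x : Fin n) :
    ∃ b : Fin n, (∀ i, b ≠ f i) ∧ b ≠ x := by
  classical
  set S : Finset (Fin n) := (Finset.univ.image f) ∪ {x} with hS
  have hcard : S.card ≤ 7 := by
    refine le_trans (Finset.card_union_le _ _) ?_
    have h1 : (Finset.univ.image f).card ≤ 6 := by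
      refine le_trans Finset.card_image_le ?_
      simp
    simp only [Finset.card_singleton]
    omega
  have hb : ∃ b : Fin n, b ∉ S := by
    by_contra h
    push_neg at h
    have : (Finset.univ : Finset (Fin n)) ⊆ S := fun y _ => h y
    have := Finset.card_le_card this
    simp only [Finset.card_univ, Fintype.card_fin] at this
    omega
  obtain ⟨b, hbS⟩ := hb
  simp only [hS, Finset.mem_union, Finset.mem_image, Finset.mem_singleton, not_or,
    not_exists] at hbS
  push_neg at hbS
  exact ⟨b, fun i h => hbS.1 i (Finset.mem_univ i) h.symm, hbS.2⟩

/-- Case A1: two fresh crossing edges with distinct ends on both sides. -/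
lemma lemA1 (hf : Function.Injective f) (hR : RB c f) {x1 x2 : Fin n} {t1 t2 : Fin 6}
    (hx1 : ∀ i, x1 ≠ f i) (hx2 : ∀ i, x2 ≠ f i) (hx12 : x1 ≠ x2) (ht : t1 ≠ t2)
    (hfr1 : Fresh c f (c s(x1, f t1))) (hfr2 : Fresh c f (c s(x2, f t2)))
    (hdd : c s(x1, f t1) ≠ c s(x2, f t2)) : HasRainbowCopy c twoP4 := by
  obtain ⟨z1, z2, z3, z4, hnd, hE1, hE2, hE3, hE4⟩ := sel1 ht
  have h' := hnd
  simp only [List.nodup_cons, List.mem_cons, List.not_mem_nil, or_false, not_or,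
    List.nodup_nil, and_true] at h'
  obtain ⟨⟨d1,d2,d3,d4,d5⟩,⟨d6,d7,d8,d9⟩,⟨d10,d11,d12⟩,⟨d13,d14⟩,⟨d15,-⟩⟩ := h'
  exact shape1 hf hR hx1 hx2 hx12 hnd hE1 hE2 hE3 hE4 hdd
    (Ne.symm (hfr1 _ _ d1)) (Ne.symm (hfr1 _ _ d6)) (Ne.symm (hfr1 _ _ d13))
    (Ne.symm (hfr1 _ _ d15))
    (Ne.symm (hfr2 _ _ d1)) (Ne.symm (hfr2 _ _ d6)) (Ne.symm (hfr2 _ _ d13))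
    (Ne.symm (hfr2 _ _ d15))

/-- Generic use of shape 2 with covered special colors. -/
lemma lemS2 (hf : Function.Injective f) (hR : RB c f) {a b : Fin n} {t : Fin 6}
    (ha : ∀ i, a ≠ f i) (hb : ∀ i, b ≠ f i) (hab : a ≠ b) {p1 p2 q1 q2 : Fin 6}
    (hcA : Cov c f (c s(a,b)) p1 p2) (hcB : Cov c f (c s(b, f t)) q1 q2)
    (hd : c s(a,b) ≠ c s(b, f t)) : HasRainbowCopy c twoP4 := by
  obtain ⟨i2, i3, i4, i5, i6, hnd, ⟨e1, e1a, e1b⟩, ⟨e2, e2a, e2b⟩, ⟨e3, e3a, e3b⟩,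
    ⟨e4, e4a, e4b⟩⟩ := sel2 t p1 p2 q1 q2
  have h' := hnd
  simp only [List.nodup_cons, List.mem_cons, List.not_mem_nil, or_false, not_or,
    List.nodup_nil, and_true] at h'
  obtain ⟨⟨d1,d2,d3,d4,d5⟩,⟨d6,d7,d8,d9⟩,⟨d10,d11,d12⟩,⟨d13,d14⟩,⟨d15,-⟩⟩ := h'
  exact shape2 hf hR ha hb hab hnd e1 e2 e3 e4 hd
    (Ne.symm (hcA _ _ d1 e1 e1a)) (Ne.symm (hcA _ _ d10 e2 e2a))
    (Ne.symm (hcA _ _ d13 e3 e3a)) (Ne.symm (hcA _ _ d15 e4 e4a))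
    (Ne.symm (hcB _ _ d1 e1 e1b)) (Ne.symm (hcB _ _ d10 e2 e2b))
    (Ne.symm (hcB _ _ d13 e3 e3b)) (Ne.symm (hcB _ _ d15 e4 e4b))

/-- Case A3: two fresh crossing edges sharing their `W`-endpoint. -/
lemma lemA3 (hf : Function.Injective f) (hR : RB c f) {x1 x2 : Fin n} {t : Fin 6}
    (hx1 : ∀ i, x1 ≠ f i) (hx2 : ∀ i, x2 ≠ f i) (h12 : x1 ≠ x2)
    (hfr1 : Fresh c f (c s(x1, f t))) (hfr2 : Fresh c f (c s(x2, f t)))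
    (hdd : c s(x1, f t) ≠ c s(x2, f t)) : HasRainbowCopy c twoP4 := by
  have hswap : (s(x2, x1) : Sym2 (Fin n)) = s(x1, x2) := Sym2.eq_swap
  by_cases hγ : c s(x1, x2) = c s(x2, f t)
  · exact lemS2 hf hR hx2 hx1 (Ne.symm h12) (p1 := 0) (p2 := 1) (q1 := 0) (q2 := 1)
      (fun k l h _ _ => by rw [hswap, hγ]; exact hfr2 k l h)
      (fun k l h _ _ => hfr1 k l h)
      (by rw [hswap, hγ]; exact Ne.symm hdd)
  · obtain ⟨p1, p2, hcov⟩ := cover hR (c s(x1, x2))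
    exact lemS2 hf hR hx1 hx2 h12 (q1 := 0) (q2 := 1)
      (fun k l h h1 h2 => hcov k l h h1 h2)
      (fun k l h _ _ => hfr2 k l h) hγ

/-- Case B1: a fresh crossing edge and a disjoint fresh outside edge. -/
lemma lemB1 (hf : Function.Injective f) (hR : RB c f) {x1 x2 y2 : Fin n} {t : Fin 6}
    (hx1 : ∀ i, x1 ≠ f i) (hx2 : ∀ i, x2 ≠ f i) (hy2 : ∀ i, y2 ≠ f i)
    (h12 : x1 ≠ x2) (h1y : x1 ≠ y2) (h2y : x2 ≠ y2)
    (hfr1 : Fresh c f (c s(x1, f t))) (hfr2 : Fresh c f (c s(x2, y2)))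
    (hdd : c s(x1, f t) ≠ c s(x2, y2)) : HasRainbowCopy c twoP4 := by
  by_cases H1 : ∃ u : Fin 6, u ≠ t ∧ c s(y2, f u) ≠ c s(x1, f t) ∧ c s(y2, f u) ≠ c s(x2, y2)
  · obtain ⟨u, hut, hg1, hg2⟩ := H1
    obtain ⟨p1, p2, hcov⟩ := cover hR (c s(y2, f u))
    obtain ⟨i2, i3, i6, hnd, ⟨e1, e1a⟩, ⟨e2, e2a⟩, ⟨e3, e3a⟩⟩ :=
      sel3 p1 p2 (fun h => hut h.symm)
    have h' := hnd
    simp only [List.nodup_cons, List.mem_cons, List.not_mem_nil, or_false, not_or,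
      List.nodup_nil, and_true] at h'
    obtain ⟨⟨d1,d2,d3,d4⟩,⟨d5,d6,d7⟩,⟨d8,d9⟩,⟨d10,-⟩⟩ := h'
    exact shape3 hf hR hx1 hx2 hy2 h12 h1y h2y hnd e1 e2 e3
      hdd (Ne.symm hg1) (Ne.symm hg2)
      (Ne.symm (hfr1 _ _ d1)) (Ne.symm (hfr1 _ _ d5)) (Ne.symm (hfr1 _ _ d10))
      (Ne.symm (hfr2 _ _ d1)) (Ne.symm (hfr2 _ _ d5)) (Ne.symm (hfr2 _ _ d10))
      (Ne.symm (hcov _ _ d1 e1 e1a)) (Ne.symm (hcov _ _ d5 e2 e2a))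
      (Ne.symm (hcov _ _ d10 e3 e3a))
  · push_neg at H1
    by_cases H2 : ∃ u : Fin 6, u ≠ t ∧ c s(y2, f u) = c s(x2, y2)
    · obtain ⟨u, hut, hcu⟩ := H2
      exact lemA1 hf hR hx1 hy2 h1y (fun h => hut h.symm) hfr1
        (by rw [hcu]; exact hfr2) (by rw [hcu]; exact hdd)
    · push_neg at H2
      obtain ⟨u, hut, -⟩ := exists_ne2 t t
      have hcu : c s(y2, f u) = c s(x1, f t) := by
        by_contra hne
        exact H2 u hut (H1 u hut hne)
      exact lemS2 hf hR hx2 hy2 h2y (p1 := 0) (p2 := 1) (q1 := 0) (q2 := 1)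
        (fun k l h _ _ => hfr2 k l h)
        (fun k l h _ _ => by rw [hcu]; exact hfr1 k l h)
        (by rw [hcu]; exact Ne.symm hdd)

/-- Case CC: both fresh edges are crossing edges. -/
lemma lemCC (hf : Function.Injective f) (hR : RB c f) (hn : 8 ≤ n)
    {x1 x2 : Fin n} {t1 t2 : Fin 6}
    (hx1 : ∀ i, x1 ≠ f i) (hx2 : ∀ i, x2 ≠ f i)
    (hfr1 : Fresh c f (c s(x1, f t1))) (hfr2 : Fresh c f (c s(x2, f t2)))
    (hdd : c s(x1, f t1) ≠ c s(x2, f t2)) : HasRainbowCopy c twoP4 := by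
  rcases eq_or_ne t1 t2 with rfl | htt
  · have h12 : x1 ≠ x2 := fun h => hdd (by rw [h])
    exact lemA3 hf hR hx1 hx2 h12 hfr1 hfr2 hdd
  · rcases eq_or_ne x1 x2 with rfl | hxx
    · obtain ⟨b, hbo, hbx⟩ := exists_outside2 hn f x1
      by_cases Hb1 : ∃ u : Fin 6, u ≠ t2 ∧ c s(b, f u) = c s(x1, f t1)
      · obtain ⟨u, hu, hcb⟩ := Hb1
        exact lemA1 hf hR hbo hx1 hbx hu (by rw [hcb]; exact hfr1) hfr2
          (by rw [hcb]; exact hdd)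
      · by_cases Hb2 : ∃ u : Fin 6, u ≠ t1 ∧ c s(b, f u) = c s(x1, f t2)
        · obtain ⟨u, hu, hcb⟩ := Hb2
          exact lemA1 hf hR hx1 hbo (Ne.symm hbx) (fun h => hu h.symm) hfr1
            (by rw [hcb]; exact hfr2) (by rw [hcb]; exact hdd)
        · push_neg at Hb1 Hb2
          obtain ⟨u, hu1, hu2⟩ := exists_ne2 t1 t2
          obtain ⟨p1, p2, hcov⟩ := cover hR (c s(b, f u))
          obtain ⟨i1, i5, i6, hnd, ⟨e1, e1a⟩, ⟨e2, e2a⟩, ⟨e3, e3a⟩⟩ :=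
            sel6 p1 p2 htt (Ne.symm hu1) (Ne.symm hu2)
          have h' := hnd
          simp only [List.nodup_cons, List.mem_cons, List.not_mem_nil, or_false, not_or,
            List.nodup_nil, and_true] at h'
          obtain ⟨⟨d1,d2,d3,d4,d5⟩,⟨d6,d7,d8,d9⟩,⟨d10,d11,d12⟩,⟨d13,d14⟩,⟨d15,-⟩⟩ := h'
          have w1 : (s(f t1, x1) : Sym2 (Fin n)) = s(x1, f t1) := Sym2.eq_swap
          exact shape6 hf hR hx1 hbo (Ne.symm hbx) hnd e1 e2 e3
            (by rw [w1]; exact hdd)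
            (by rw [w1]; exact Ne.symm (Hb1 u hu2))
            (Ne.symm (Hb2 u hu1))
            (by rw [w1]; exact Ne.symm (hfr1 _ _ d1))
            (by rw [w1]; exact Ne.symm (hfr1 _ _ d13))
            (by rw [w1]; exact Ne.symm (hfr1 _ _ d15))
            (Ne.symm (hfr2 _ _ d1)) (Ne.symm (hfr2 _ _ d13)) (Ne.symm (hfr2 _ _ d15))
            (Ne.symm (hcov _ _ d1 e1 e1a)) (Ne.symm (hcov _ _ d13 e2 e2a))
            (Ne.symm (hcov _ _ d15 e3 e3a))
    · exact lemA1 hf hR hx1 hx2 hxx htt hfr1 hfr2 hdd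

/-- Case CO: a fresh crossing edge and a fresh outside edge. -/
lemma lemCO (hf : Function.Injective f) (hR : RB c f) {x1 x2 y2 : Fin n} {t : Fin 6}
    (hx1 : ∀ i, x1 ≠ f i) (hx2 : ∀ i, x2 ≠ f i) (hy2 : ∀ i, y2 ≠ f i) (h2y : x2 ≠ y2)
    (hfr1 : Fresh c f (c s(x1, f t))) (hfr2 : Fresh c f (c s(x2, y2)))
    (hdd : c s(x1, f t) ≠ c s(x2, y2)) : HasRainbowCopy c twoP4 := by
  rcases eq_or_ne x1 x2 with rfl | h12
  · have w : (s(y2, x1) : Sym2 (Fin n)) = s(x1, y2) := Sym2.eq_swap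
    exact lemS2 hf hR hy2 hx1 (Ne.symm h2y) (p1 := 0) (p2 := 1) (q1 := 0) (q2 := 1)
      (fun k l h _ _ => by rw [w]; exact hfr2 k l h)
      (fun k l h _ _ => hfr1 k l h)
      (by rw [w]; exact Ne.symm hdd)
  · rcases eq_or_ne x1 y2 with heq | h1y
    · subst heq
      exact lemS2 hf hR hx2 hx1 h2y (p1 := 0) (p2 := 1) (q1 := 0) (q2 := 1)
        (fun k l h _ _ => hfr2 k l h)
        (fun k l h _ _ => hfr1 k l h)
        (Ne.symm hdd)
    · exact lemB1 hf hR hx1 hx2 hy2 h12 h1y h2y hfr1 hfr2 hdd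

/-- Case OO: both fresh edges lie outside `W`. -/
lemma lemOO (hf : Function.Injective f) (hR : RB c f) {x1 y1 x2 y2 : Fin n}
    (hx1 : ∀ i, x1 ≠ f i) (hy1 : ∀ i, y1 ≠ f i) (hx2 : ∀ i, x2 ≠ f i) (hy2 : ∀ i, y2 ≠ f i)
    (h1 : x1 ≠ y1) (h2 : x2 ≠ y2) (hyy : y1 ≠ y2)
    (hfr1 : Fresh c f (c s(x1, y1))) (hfr2 : Fresh c f (c s(x2, y2)))
    (hdd : c s(x1, y1) ≠ c s(x2, y2)) : HasRainbowCopy c twoP4 := by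
  by_cases H1 : ∃ u : Fin 6, c s(y1, f u) = c s(x2, y2)
  · obtain ⟨u, hcu⟩ := H1
    exact lemS2 hf hR hx1 hy1 h1 (p1 := 0) (p2 := 1) (q1 := 0) (q2 := 1)
      (fun k l h _ _ => hfr1 k l h)
      (fun k l h _ _ => by rw [hcu]; exact hfr2 k l h)
      (by rw [hcu]; exact hdd)
  · push_neg at H1
    by_cases H2 : ∃ u : Fin 6, c s(y1, f u) ≠ c s(x1, y1)
    · obtain ⟨u, hγ⟩ := H2
      obtain ⟨p1, p2, hcov⟩ := cover hR (c s(y1, f u))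
      exact lemS2 hf hR hx1 hy1 h1 (p1 := 0) (p2 := 1)
        (fun k l h _ _ => hfr1 k l h)
        (fun k l h h1' h2' => hcov k l h h1' h2')
        (Ne.symm hγ)
    · push_neg at H2
      by_cases H3 : ∃ u : Fin 6, c s(y2, f u) = c s(x1, y1)
      · obtain ⟨u, hcu⟩ := H3
        exact lemS2 hf hR hx2 hy2 h2 (p1 := 0) (p2 := 1) (q1 := 0) (q2 := 1)
          (fun k l h _ _ => hfr2 k l h)
          (fun k l h _ _ => by rw [hcu]; exact hfr1 k l h)
          (by rw [hcu]; exact Ne.symm hdd)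
      · push_neg at H3
        by_cases H4 : ∃ u : Fin 6, c s(y2, f u) ≠ c s(x2, y2)
        · obtain ⟨u, hγ⟩ := H4
          obtain ⟨p1, p2, hcov⟩ := cover hR (c s(y2, f u))
          exact lemS2 hf hR hx2 hy2 h2 (p1 := 0) (p2 := 1)
            (fun k l h _ _ => hfr2 k l h)
            (fun k l h h1' h2' => hcov k l h h1' h2')
            (Ne.symm hγ)
        · push_neg at H4
          exact lemA1 hf hR hy1 hy2 hyy (t1 := 0) (t2 := 1) (by decide)
            (by rw [H2 0]; exact hfr1)
            (by rw [H4 1]; exact hfr2)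
            (by rw [H2 0, H4 1]; exact hdd)

/-- Final dispatcher. -/
lemma lemFinal (hf : Function.Injective f) (hR : RB c f) (hn : 8 ≤ n)
    {u1 v1 u2 v2 : Fin n} (ha1 : u1 ≠ v1) (ha2 : u2 ≠ v2)
    (ho1 : ∀ i, u1 ≠ f i) (ho2 : ∀ i, u2 ≠ f i)
    (hfr1 : Fresh c f (c s(u1, v1))) (hfr2 : Fresh c f (c s(u2, v2)))
    (hdd : c s(u1, v1) ≠ c s(u2, v2)) : HasRainbowCopy c twoP4 := by
  by_cases h1 : ∃ t, v1 = f t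
  · obtain ⟨t1, rfl⟩ := h1
    by_cases h2 : ∃ t, v2 = f t
    · obtain ⟨t2, rfl⟩ := h2
      exact lemCC hf hR hn ho1 ho2 hfr1 hfr2 hdd
    · push_neg at h2
      exact lemCO hf hR ho1 ho2 (fun i h => h2 i h) ha2 hfr1 hfr2 hdd
  · push_neg at h1
    by_cases h2 : ∃ t, v2 = f t
    · obtain ⟨t2, rfl⟩ := h2
      exact lemCO hf hR ho2 ho1 (fun i h => h1 i h) ha1 hfr2 hfr1 (Ne.symm hdd)
    · push_neg at h2
      rcases eq_or_ne v1 v2 with rfl | hvv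
      · have huu : u1 ≠ u2 := by
          intro h
          exact hdd (by rw [h])
        have w : (s(v1, u2) : Sym2 (Fin n)) = s(u2, v1) := Sym2.eq_swap
        exact lemOO hf hR ho1 (fun i h => h1 i h) (fun i h => h1 i h) ho2
          ha1 (fun h => ha2 h.symm) (fun h => ha2 h.symm)
          hfr1 (by rw [w]; exact hfr2) (by rw [w]; exact hdd)
      · exact lemOO hf hR ho1 (fun i h => h1 i h) ho2 (fun i h => h2 i h)
          ha1 ha2 hvv hfr1 hfr2 hdd



end Shapes

end TwoP4AR

/-- **Fact 1.** Let `n ≥ 8`. If an edge-coloring of `K_n` uses exactly 17 colors and there is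
a rainbow copy of `K₆` or of `K₆` minus one edge, then there is a rainbow copy of `2P₄`. -/
theorem rainbow_K6_imp_twoP4 (n : ℕ) (hn : 8 ≤ n) (c : Sym2 (Fin n) → ℕ)
    (hc : colorCount c = 17)
    (h6 : HasRainbowCopy c (⊤ : SimpleGraph (Fin 6)) ∨
      HasRainbowCopy c ((⊤ : SimpleGraph (Fin 6)).deleteEdges {s((0 : Fin 6), (1 : Fin 6))})) :
    HasRainbowCopy c twoP4 := by
  classical
  -- In both cases we get a rainbow copy of `K₆` minus the edge `{0,1}`.
  have hcopy : HasRainbowCopy c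
      ((⊤ : SimpleGraph (Fin 6)).deleteEdges {s((0 : Fin 6), (1 : Fin 6))}) := by
    rcases h6 with h | h
    · obtain ⟨f, hf, hrb⟩ := h
      have hsub := SimpleGraph.edgeSet_mono
        (SimpleGraph.deleteEdges_le {s((0 : Fin 6), (1 : Fin 6))} :
          (⊤ : SimpleGraph (Fin 6)).deleteEdges _ ≤ ⊤)
      exact ⟨f, hf, fun e1 he1 e2 he2 hne => hrb e1 (hsub he1) e2 (hsub he2) hne⟩
    · exact h
  obtain ⟨f, hf, hrb⟩ := hcopy
  have hR : TwoP4AR.RB c f := by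
    intro i j k l hij hkl hne hg1 hg2
    have m1 : s(i,j) ∈ ((⊤ : SimpleGraph (Fin 6)).deleteEdges
        {s((0 : Fin 6), (1 : Fin 6))}).edgeSet := by
      rw [SimpleGraph.edgeSet_deleteEdges]
      exact ⟨by simpa using hij, by simpa using hg1⟩
    have m2 : s(k,l) ∈ ((⊤ : SimpleGraph (Fin 6)).deleteEdges
        {s((0 : Fin 6), (1 : Fin 6))}).edgeSet := by
      rw [SimpleGraph.edgeSet_deleteEdges]
      exact ⟨by simpa using hkl, by simpa using hg2⟩
    have := hrb _ m1 _ m2 hne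
    rwa [Sym2.map_pair_eq, Sym2.map_pair_eq] at this
  -- Count the colors appearing inside the copy.
  set Cin : Finset ℕ :=
    (Finset.univ.filter (fun e : Sym2 (Fin 6) => ¬ e.IsDiag)).image
      (fun e => c (Sym2.map f e)) with hCin
  have hCinCard : Cin.card ≤ 15 := by
    have h15 : (Finset.univ.filter (fun e : Sym2 (Fin 6) => ¬ e.IsDiag)).card = 15 := by decide
    exact le_trans Finset.card_image_le (le_of_eq h15)
  have hCsub : (↑Cin : Set ℕ) ⊆ c '' (⊤ : SimpleGraph (Fin n)).edgeSet := by
    intro x hx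
    rw [Finset.mem_coe, hCin, Finset.mem_image] at hx
    obtain ⟨e, he, rfl⟩ := hx
    rw [Finset.mem_filter] at he
    induction e using Sym2.ind with | _ i j =>
    have hij : i ≠ j := by simpa [Sym2.mk_isDiag_iff] using he.2
    refine ⟨s(f i, f j), ?_, by rw [Sym2.map_pair_eq]⟩
    rw [SimpleGraph.mem_edgeSet, SimpleGraph.top_adj]
    exact fun h => hij (hf h)
  have hUfin : (c '' (⊤ : SimpleGraph (Fin n)).edgeSet).Finite :=
    Set.Finite.image _ (Set.toFinite _)
  have h2 : 1 < ((c '' (⊤ : SimpleGraph (Fin n)).edgeSet) \ (↑Cin : Set ℕ)).ncard := by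
    rw [Set.ncard_diff hCsub (Set.toFinite _)]
    have hU : (c '' (⊤ : SimpleGraph (Fin n)).edgeSet).ncard = 17 := hc
    have hCn : (↑Cin : Set ℕ).ncard ≤ 15 := by
      rw [Set.ncard_coe_finset]; exact hCinCard
    omega
  obtain ⟨d1, d2, hd1, hd2, hdd⟩ :=
    (Set.one_lt_ncard_iff (hUfin.diff (t := (↑Cin : Set ℕ)))).mp h2
  -- Unpack the two fresh colors into fresh edges with an endpoint outside the copy.
  have extract : ∀ d : ℕ,
      d ∈ (c '' (⊤ : SimpleGraph (Fin n)).edgeSet) \ (↑Cin : Set ℕ) →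
      ∃ x y : Fin n, x ≠ y ∧ (∀ i, x ≠ f i) ∧ c s(x, y) = d := by
    intro d hd
    obtain ⟨⟨e, he, hce⟩, hnotin⟩ := hd
    have hfr : ∀ k l : Fin 6, k ≠ l → c s(f k, f l) ≠ d := by
      intro k l hkl heq
      refine hnotin ?_
      rw [Finset.mem_coe, hCin, Finset.mem_image]
      exact ⟨s(k, l), by
        rw [Finset.mem_filter]
        exact ⟨Finset.mem_univ _, by simpa [Sym2.mk_isDiag_iff] using hkl⟩,
        by rw [Sym2.map_pair_eq]; exact heq⟩
    obtain ⟨⟨u, v⟩, rfl⟩ := e.exists_rep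
    have huv : u ≠ v := by
      rw [SimpleGraph.mem_edgeSet, SimpleGraph.top_adj] at he
      exact he
    by_cases hu : ∃ i, u = f i
    · obtain ⟨i, rfl⟩ := hu
      by_cases hv : ∃ j, v = f j
      · obtain ⟨j, rfl⟩ := hv
        exact absurd hce (hfr i j (fun h => huv (by rw [h])))
      · push_neg at hv
        refine ⟨v, f i, fun h => huv h.symm, fun j h => hv j h, ?_⟩
        rw [Sym2.eq_swap]; exact hce
    · push_neg at hu
      exact ⟨u, v, huv, fun i h => hu i h, hce⟩
  obtain ⟨x1, y1, hxy1, hox1, hc1⟩ := extract d1 hd1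
  obtain ⟨x2, y2, hxy2, hox2, hc2⟩ := extract d2 hd2
  have hfr1 : TwoP4AR.Fresh c f (c s(x1, y1)) := by
    rw [hc1]
    intro k l hkl heq
    exact (hd1.2) (by
      rw [Finset.mem_coe, hCin, Finset.mem_image]
      exact ⟨s(k, l), by
        rw [Finset.mem_filter]
        exact ⟨Finset.mem_univ _, by simpa [Sym2.mk_isDiag_iff] using hkl⟩,
        by rw [Sym2.map_pair_eq]; exact heq⟩)
  have hfr2 : TwoP4AR.Fresh c f (c s(x2, y2)) := by
    rw [hc2]
    intro k l hkl heq
    exact (hd2.2) (by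
      rw [Finset.mem_coe, hCin, Finset.mem_image]
      exact ⟨s(k, l), by
        rw [Finset.mem_filter]
        exact ⟨Finset.mem_univ _, by simpa [Sym2.mk_isDiag_iff] using hkl⟩,
        by rw [Sym2.map_pair_eq]; exact heq⟩)
  exact TwoP4AR.lemFinal hf hR hn hxy1 hxy2 hox1 hox2 hfr1 hfr2
    (by rw [hc1, hc2]; exact hdd)
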